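/- Let 1/2 ≤ H₁ < H₂ < 1. For all x ∈ (0,1), x^{1-H₂+H₁} · F(H₁-H₂+1, 3/2-H₁, 2-H₁+H₂; x) ≤ ((1-H₁+H₂)/(H₂-1/2))^{H₁-H₂+1}, where F is the Gauss hypergeometric function. -/
import Mathlib

open MeasureTheory

noncomputable def betaB (a b : ℝ) : ℝ := ∫ x in (0:ℝ)..1, x ^ (a - 1) * (1 - x) ^ (b - 1)

noncomputable def gaussF (a b c x : ℝ) : ℝ :=
  (betaB b (c - b))⁻¹ * ∫ t in (0:ℝ)..1, t ^ (b - 1) * (1 - t) ^ (c - b - 1) * (1 - x*t) ^ (-a)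

lemma betaB_complex (p q : ℝ) : Complex.betaIntegral p q = (betaB p q : ℂ) := by
  rw [Complex.betaIntegral, betaB, ← intervalIntegral.integral_ofReal]
  refine intervalIntegral.integral_congr fun t ht => ?_
  rw [Set.uIcc_of_le (by norm_num : (0:ℝ) ≤ 1)] at ht
  have h1t : (0:ℝ) ≤ 1 - t := by linarith [ht.2]
  rw [Complex.ofReal_mul, Complex.ofReal_cpow ht.1, Complex.ofReal_cpow h1t]
  push_cast
  ring

lemma Gamma_mul_betaB {p q : ℝ} (hp : 0 < p) (hq : 0 < q) :
    Real.Gamma p * Real.Gamma q = Real.Gamma (p + q) * betaB p q := by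
  have h := Complex.Gamma_mul_Gamma_eq_betaIntegral
    (show 0 < Complex.re p by simpa using hp) (show 0 < Complex.re q by simpa using hq)
  rw [betaB_complex, ← Complex.ofReal_add, Complex.Gamma_ofReal, Complex.Gamma_ofReal,
    Complex.Gamma_ofReal, ← Complex.ofReal_mul, ← Complex.ofReal_mul, Complex.ofReal_inj] at h
  exact h

lemma betaB_pos {p q : ℝ} (hp : 0 < p) (hq : 0 < q) : 0 < betaB p q := by
  have h := Gamma_mul_betaB hp hq
  have h1 := Real.Gamma_pos_of_pos hp
  have h2 := Real.Gamma_pos_of_pos hq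
  have h3 := Real.Gamma_pos_of_pos (show (0:ℝ) < p + q by linarith)
  nlinarith [mul_pos h1 h2]

lemma betaB_rec {p q : ℝ} (hp : 0 < p) (hq : 0 < q) :
    betaB p q = ((p + q) / q) * betaB p (q + 1) := by
  have h1 := Gamma_mul_betaB hp hq
  have h2 := Gamma_mul_betaB hp (show (0:ℝ) < q + 1 by linarith)
  rw [Real.Gamma_add_one hq.ne', show p + (q + 1) = (p + q) + 1 from by ring,
    Real.Gamma_add_one (show p + q ≠ 0 by positivity)] at h2
  have hG := (Real.Gamma_pos_of_pos (show (0:ℝ) < p + q by linarith)).ne'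
  have key : Real.Gamma (p+q) * (q * betaB p q)
      = Real.Gamma (p+q) * ((p+q) * betaB p (q+1)) := by
    linear_combination h2 - q * h1
  have key2 := mul_left_cancel₀ hG key
  field_simp
  linarith [key2]

lemma betaB_integrableOn {p q : ℝ} (hp : 0 < p) (hq : 0 < q) :
    IntegrableOn (fun t : ℝ => t ^ (p - 1) * (1 - t) ^ (q - 1)) (Set.Ioo 0 1) := by
  have h := Complex.betaIntegral_convergent
    (show 0 < Complex.re p by simpa using hp) (show 0 < Complex.re q by simpa using hq)
  rw [intervalIntegrable_iff, Set.uIoc_of_le (by norm_num : (0:ℝ) ≤ 1)] at h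
  have h2 : IntegrableOn (fun t : ℝ => ((t:ℂ) ^ ((p:ℂ) - 1) * (1 - (t:ℂ)) ^ ((q:ℂ) - 1)).re)
      (Set.Ioc 0 1) := h.re
  refine ((h2.congr_fun (fun t ht => ?_) measurableSet_Ioc).mono_set Set.Ioo_subset_Ioc_self)
  have ht0 : (0:ℝ) ≤ t := ht.1.le
  have h1t : (0:ℝ) ≤ 1 - t := by linarith [ht.2]
  show _ = _
  rw [show ((p:ℂ) - 1) = ((p - 1 : ℝ) : ℂ) from by push_cast; ring,
    show ((q:ℂ) - 1) = ((q - 1 : ℝ) : ℂ) from by push_cast; ring,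
    show (1 - (t:ℂ)) = ((1 - t : ℝ) : ℂ) from by push_cast; ring,
    ← Complex.ofReal_cpow ht0, ← Complex.ofReal_cpow h1t, ← Complex.ofReal_mul,
    Complex.ofReal_re]


lemma betaB_eq_setIntegral (p q : ℝ) :
    betaB p q = ∫ t in Set.Ioo (0:ℝ) 1, t ^ (p - 1) * (1 - t) ^ (q - 1) := by
  rw [betaB, intervalIntegral.integral_of_le (by norm_num : (0:ℝ) ≤ 1),
    MeasureTheory.integral_Ioc_eq_integral_Ioo]

lemma main_aux {a b β x : ℝ} (ha0 : 0 < a) (ha1 : a < 1) (hb : 0 < b)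
    (hβ : 1 < β) (hx0 : 0 < x) (hx1 : x < 1) :
    x ^ a * ((betaB b β)⁻¹ *
        ∫ t in (0:ℝ)..1, t ^ (b - 1) * (1 - t) ^ (β - 1) * (1 - x*t) ^ (-a))
      ≤ ((b + β - 1) / (β - 1)) ^ a := by
  set M : ℝ := (b + β - 1) / (β - 1) with hM
  have hβ0 : (0:ℝ) < β := by linarith
  have hβ1 : (0:ℝ) < β - 1 := by linarith
  have hβa : (0:ℝ) < β - a := by linarith
  have hM0 : 0 < M := by
    apply div_pos (by linarith) hβ1
  have hB : 0 < betaB b β := betaB_pos hb hβ0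
  have hBg : 0 < betaB b (β - 1) := betaB_pos hb hβ1
  have hw : IntegrableOn (fun t : ℝ => t ^ (b-1) * (1-t) ^ (β-1)) (Set.Ioo 0 1) :=
    betaB_integrableOn hb hβ0
  have hK : IntegrableOn (fun t : ℝ => t ^ (b-1) * (1-t) ^ (β - a - 1)) (Set.Ioo 0 1) :=
    betaB_integrableOn hb hβa
  have hg : IntegrableOn (fun t : ℝ => t ^ (b-1) * (1-t) ^ (β - 1 - 1)) (Set.Ioo 0 1) :=
    betaB_integrableOn hb hβ1
  -- integrability of the full integrand
  have measJ : AEStronglyMeasurable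
      (fun t : ℝ => t ^ (b-1) * (1-t) ^ (β-1) * (1 - x*t) ^ (-a))
      (volume.restrict (Set.Ioo (0:ℝ) 1)) := by
    apply Measurable.aestronglyMeasurable; fun_prop
  have hJ : IntegrableOn (fun t : ℝ => t ^ (b-1) * (1-t) ^ (β-1) * (1 - x*t) ^ (-a))
      (Set.Ioo 0 1) := by
    refine Integrable.mono (hw.const_mul ((1-x) ^ (-a))) measJ ?_
    refine ae_restrict_of_forall_mem measurableSet_Ioo fun t ht => ?_
    obtain ⟨ht0, ht1⟩ := ht
    have h1t : (0:ℝ) < 1 - t := by linarith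
    have h1x : (0:ℝ) < 1 - x := by linarith
    have h1xt : (0:ℝ) < 1 - x*t := by nlinarith
    have hwnn : 0 ≤ t ^ (b-1) * (1-t) ^ (β-1) :=
      mul_nonneg (Real.rpow_nonneg ht0.le _) (Real.rpow_nonneg h1t.le _)
    rw [Real.norm_eq_abs, Real.norm_eq_abs,
      abs_of_nonneg (mul_nonneg hwnn (Real.rpow_nonneg h1xt.le _)),
      abs_of_nonneg (mul_nonneg (Real.rpow_nonneg h1x.le _) hwnn)]
    have hmono : (1 - x*t) ^ (-a) ≤ (1-x) ^ (-a) :=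
      Real.rpow_le_rpow_of_nonpos h1x (by nlinarith) (by linarith)
    nlinarith [hmono, hwnn, Real.rpow_nonneg h1xt.le (-a)]
  -- pointwise bound and monotonicity of the integral
  have mono : x ^ a * ∫ t in Set.Ioo (0:ℝ) 1, t ^ (b-1) * (1-t) ^ (β-1) * (1 - x*t) ^ (-a)
      ≤ ∫ t in Set.Ioo (0:ℝ) 1, t ^ (b-1) * (1-t) ^ (β - a - 1) := by
    rw [← integral_const_mul]
    refine setIntegral_mono_on (hJ.const_mul _) hK measurableSet_Ioo fun t ht => ?_
    obtain ⟨ht0, ht1⟩ := ht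
    have h1t : (0:ℝ) < 1 - t := by linarith
    have h1xt : (0:ℝ) < 1 - x*t := by nlinarith
    have key : x ^ a * (1 - x*t) ^ (-a) ≤ (1-t) ^ (-a) := by
      have hxa : (0:ℝ) < (1 - x*t) ^ a := Real.rpow_pos_of_pos h1xt a
      have hta : (0:ℝ) < (1 - t) ^ a := Real.rpow_pos_of_pos h1t a
      have h : x * (1-t) ≤ 1 - x*t := by nlinarith
      have h2 : (x*(1-t)) ^ a ≤ (1-x*t) ^ a :=
        Real.rpow_le_rpow (by positivity) h ha0.le
      rw [Real.mul_rpow hx0.le h1t.le] at h2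
      rw [Real.rpow_neg h1xt.le, Real.rpow_neg h1t.le, ← div_eq_mul_inv, ← one_div,
        div_le_div_iff₀ hxa hta, one_mul]
      exact h2
    have split : (1-t) ^ (β - a - 1) = (1-t) ^ (β - 1) * (1-t) ^ (-a) := by
      rw [← Real.rpow_add h1t, show β - 1 + -a = β - a - 1 from by ring]
    calc x ^ a * (t ^ (b-1) * (1-t) ^ (β-1) * (1 - x*t) ^ (-a))
        = (t ^ (b-1) * (1-t) ^ (β-1)) * (x ^ a * (1 - x*t) ^ (-a)) := by ring
      _ ≤ (t ^ (b-1) * (1-t) ^ (β-1)) * (1-t) ^ (-a) :=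
          mul_le_mul_of_nonneg_left key
            (mul_nonneg (Real.rpow_nonneg ht0.le _) (Real.rpow_nonneg h1t.le _))
      _ = t ^ (b-1) * (1-t) ^ (β - a - 1) := by rw [split]; ring
  -- Hölder step
  have holder : betaB b (β - a) ≤ M ^ a * betaB b β := by
    set μ := volume.restrict (Set.Ioo (0:ℝ) 1) with hμ
    have mg : AEMeasurable (fun t : ℝ => ENNReal.ofReal (t ^ (b-1) * (1-t) ^ (β-1-1))) μ := by
      apply Measurable.aemeasurable; fun_prop
    have mw2 : AEMeasurable (fun t : ℝ => ENNReal.ofReal (t ^ (b-1) * (1-t) ^ (β-1))) μ := by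
      apply Measurable.aemeasurable; fun_prop
    have hle := ENNReal.lintegral_mul_norm_pow_le (μ := μ) mg mw2 ha0.le
      (by linarith : (0:ℝ) ≤ 1 - a) (by ring)
    have nn : ∀ q : ℝ, (0:ℝ → ℝ) ≤ᵐ[μ] fun t : ℝ => t ^ (b-1) * (1-t) ^ q := by
      intro q
      refine ae_restrict_of_forall_mem measurableSet_Ioo fun t ht => ?_
      have h2 : (0:ℝ) ≤ 1 - t := by linarith [ht.2]
      show (0:ℝ) ≤ t ^ (b-1) * (1-t) ^ q
      exact mul_nonneg (Real.rpow_nonneg ht.1.le _) (Real.rpow_nonneg h2 _)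
    have ew : (∫⁻ t, ENNReal.ofReal (t ^ (b-1) * (1-t) ^ (β-1)) ∂μ)
        = ENNReal.ofReal (betaB b β) := by
      rw [betaB_eq_setIntegral]
      exact (ofReal_integral_eq_lintegral_ofReal hw (nn _)).symm
    have eg : (∫⁻ t, ENNReal.ofReal (t ^ (b-1) * (1-t) ^ (β-1-1)) ∂μ)
        = ENNReal.ofReal (betaB b (β-1)) := by
      rw [betaB_eq_setIntegral]
      exact (ofReal_integral_eq_lintegral_ofReal hg (nn _)).symm
    have eK : ENNReal.ofReal (betaB b (β - a))
        = ∫⁻ t, ENNReal.ofReal (t ^ (b-1) * (1-t) ^ (β-a-1)) ∂μ := by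
      rw [betaB_eq_setIntegral]
      exact ofReal_integral_eq_lintegral_ofReal hK (nn _)
    have congr1 : (∫⁻ t, ENNReal.ofReal (t ^ (b-1) * (1-t) ^ (β-a-1)) ∂μ)
        = ∫⁻ t, ENNReal.ofReal (t ^ (b-1) * (1-t) ^ (β-1-1)) ^ a
            * ENNReal.ofReal (t ^ (b-1) * (1-t) ^ (β-1)) ^ (1-a) ∂μ := by
      apply lintegral_congr_ae
      refine ae_restrict_of_forall_mem measurableSet_Ioo fun t ht => ?_
      obtain ⟨ht0, ht1⟩ := ht
      have h1t : (0:ℝ) < 1 - t := by linarith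
      have n1 : (0:ℝ) ≤ t ^ (b-1) * (1-t) ^ (β-1-1) :=
        mul_nonneg (Real.rpow_nonneg ht0.le _) (Real.rpow_nonneg h1t.le _)
      have n2 : (0:ℝ) ≤ t ^ (b-1) * (1-t) ^ (β-1) :=
        mul_nonneg (Real.rpow_nonneg ht0.le _) (Real.rpow_nonneg h1t.le _)
      show ENNReal.ofReal (t ^ (b-1) * (1-t) ^ (β-a-1))
          = ENNReal.ofReal (t ^ (b-1) * (1-t) ^ (β-1-1)) ^ a
            * ENNReal.ofReal (t ^ (b-1) * (1-t) ^ (β-1)) ^ (1-a)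
      rw [ENNReal.ofReal_rpow_of_nonneg n1 ha0.le,
        ENNReal.ofReal_rpow_of_nonneg n2 (by linarith : (0:ℝ) ≤ 1-a),
        ← ENNReal.ofReal_mul (Real.rpow_nonneg n1 _)]
      congr 1
      rw [Real.mul_rpow (Real.rpow_nonneg ht0.le _) (Real.rpow_nonneg h1t.le _),
        Real.mul_rpow (Real.rpow_nonneg ht0.le _) (Real.rpow_nonneg h1t.le _),
        ← Real.rpow_mul ht0.le, ← Real.rpow_mul h1t.le,
        ← Real.rpow_mul ht0.le, ← Real.rpow_mul h1t.le,
        mul_mul_mul_comm, ← Real.rpow_add ht0, ← Real.rpow_add h1t,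
        show (b-1)*a + (b-1)*(1-a) = b-1 from by ring,
        show (β-1-1)*a + (β-1)*(1-a) = β-a-1 from by ring]
    have hrec : betaB b (β-1) = M * betaB b β := by
      have h := betaB_rec hb hβ1
      rw [show β - 1 + 1 = β from by ring, show b + (β-1) = b + β - 1 from by ring] at h
      exact h
    have real_eq : (M * betaB b β) ^ a * betaB b β ^ (1-a) = M ^ a * betaB b β := by
      rw [Real.mul_rpow hM0.le hB.le, mul_assoc, ← Real.rpow_add hB,
        show a + (1-a) = 1 from by ring, Real.rpow_one]
    have chain : ENNReal.ofReal (betaB b (β - a)) ≤ ENNReal.ofReal (M ^ a * betaB b β) := by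
      calc ENNReal.ofReal (betaB b (β - a))
          = ∫⁻ t, ENNReal.ofReal (t ^ (b-1) * (1-t) ^ (β-a-1)) ∂μ := eK
        _ = ∫⁻ t, ENNReal.ofReal (t ^ (b-1) * (1-t) ^ (β-1-1)) ^ a
              * ENNReal.ofReal (t ^ (b-1) * (1-t) ^ (β-1)) ^ (1-a) ∂μ := congr1
        _ ≤ (∫⁻ t, ENNReal.ofReal (t ^ (b-1) * (1-t) ^ (β-1-1)) ∂μ) ^ a
              * (∫⁻ t, ENNReal.ofReal (t ^ (b-1) * (1-t) ^ (β-1)) ∂μ) ^ (1-a) := hle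
        _ = ENNReal.ofReal (betaB b (β-1)) ^ a * ENNReal.ofReal (betaB b β) ^ (1-a) := by
            rw [eg, ew]
        _ = ENNReal.ofReal (M ^ a * betaB b β) := by
            rw [ENNReal.ofReal_rpow_of_nonneg hBg.le ha0.le,
              ENNReal.ofReal_rpow_of_nonneg hB.le (by linarith : (0:ℝ) ≤ 1-a),
              ← ENNReal.ofReal_mul (Real.rpow_nonneg hBg.le _), hrec, real_eq]
    exact (ENNReal.ofReal_le_ofReal_iff
      (mul_nonneg (Real.rpow_nonneg hM0.le a) hB.le)).mp chain
  -- assemble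
  have hI : (∫ t in (0:ℝ)..1, t ^ (b-1) * (1-t) ^ (β-1) * (1 - x*t) ^ (-a))
      = ∫ t in Set.Ioo (0:ℝ) 1, t ^ (b-1) * (1-t) ^ (β-1) * (1 - x*t) ^ (-a) := by
    rw [intervalIntegral.integral_of_le (by norm_num : (0:ℝ) ≤ 1),
      MeasureTheory.integral_Ioc_eq_integral_Ioo]
  have step : x ^ a * ∫ t in (0:ℝ)..1, t ^ (b-1) * (1-t) ^ (β-1) * (1 - x*t) ^ (-a)
      ≤ M ^ a * betaB b β := by
    rw [hI]
    calc x ^ a * ∫ t in Set.Ioo (0:ℝ) 1, t ^ (b-1) * (1-t) ^ (β-1) * (1 - x*t) ^ (-a)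
        ≤ ∫ t in Set.Ioo (0:ℝ) 1, t ^ (b-1) * (1-t) ^ (β - a - 1) := mono
      _ = betaB b (β - a) := (betaB_eq_setIntegral b (β - a)).symm
      _ ≤ M ^ a * betaB b β := holder
  calc x ^ a * ((betaB b β)⁻¹ *
        ∫ t in (0:ℝ)..1, t ^ (b-1) * (1-t) ^ (β-1) * (1 - x*t) ^ (-a))
      = (betaB b β)⁻¹ * (x ^ a *
        ∫ t in (0:ℝ)..1, t ^ (b-1) * (1-t) ^ (β-1) * (1 - x*t) ^ (-a)) := by ring
    _ ≤ (betaB b β)⁻¹ * (M ^ a * betaB b β) :=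
        mul_le_mul_of_nonneg_left step (inv_nonneg.mpr hB.le)
    _ = M ^ a := by field_simp

theorem stmt10 (H₁ H₂ : ℝ) (h1 : 1/2 ≤ H₁) (h12 : H₁ < H₂) (h2 : H₂ < 1)
    (x : ℝ) (hx : x ∈ Set.Ioo (0:ℝ) 1) :
    x ^ (1 - H₂ + H₁) * gaussF (H₁ - H₂ + 1) (3/2 - H₁) (2 - H₁ + H₂) x
      ≤ ((1 - H₁ + H₂) / (H₂ - 1/2)) ^ (H₁ - H₂ + 1) := by
  obtain ⟨hx0, hx1⟩ := hx
  simp only [gaussF]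
  rw [show (2:ℝ) - H₁ + H₂ - (3/2 - H₁) = H₂ + 1/2 from by ring,
    show (1:ℝ) - H₂ + H₁ = H₁ - H₂ + 1 from by ring,
    show ((1:ℝ) - H₁ + H₂) / (H₂ - 1/2)
      = ((3/2 - H₁) + (H₂ + 1/2) - 1) / ((H₂ + 1/2) - 1) from by ring]
  exact main_aux (by linarith) (by linarith) (by linarith) (by linarith) hx0 hx1
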